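/- Let n = p1⋯pk be a positive squarefree integer with n ≡ 1 (mod 8) and all prime factors p_i ≡ 1 (mod 4). Let A be the k×k matrix over F_2 with entries a_{ij} = [p_j/p_i] for i ≠ j and a_{ii} = Σ_{l≠i}[p_l/p_i], and let B = ([2/p_1], …, [2/p_k])^T. Suppose rank(A | B) = k − 1 and rank(A) = k − 2, and let x = (x_1, …, x_k)^T ∈ F_2^k be any element of the kernel of A other than 0 and (1, …, 1)^T. Then d = Π p_i^{x_i} satisfies d ≡ 5 (mod 8). -/

import Mathlib

open Classical in
/-- The additive Legendre symbol `[a/p] ∈ F₂`: `0` if `a` is a square mod `p`, `1` otherwise. -/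
noncomputable def aLeg (a : ℤ) (p : ℕ) : ZMod 2 :=
  if IsSquare ((a : ZMod p)) then 0 else 1

/-- The matrix `A`: `a_{ij} = [p_j/p_i]` for `i ≠ j` and `a_{ii} = Σ_{l ≠ i} [p_l/p_i]`. -/
noncomputable def monskyA (k : ℕ) (p : Fin k → ℕ) : Matrix (Fin k) (Fin k) (ZMod 2) :=
  Matrix.of fun i j =>
    if i = j then ∑ l ∈ Finset.univ.filter (· ≠ i), aLeg (p l) (p i) else aLeg (p j) (p i)

lemma zmod2_cases : ∀ z : ZMod 2, z = 0 ∨ z = 1 := by decide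

/-- Quadratic reciprocity for the additive Legendre symbol (both primes `≡ 1 [MOD 4]`). -/
lemma aLeg_symm {q r : ℕ} (hq : q.Prime) (hr : r.Prime) (hq4 : q % 4 = 1) (hr4 : r % 4 = 1) :
    aLeg q r = aLeg r q := by
  haveI : Fact q.Prime := ⟨hq⟩
  haveI : Fact r.Prime := ⟨hr⟩
  have hr2 : r ≠ 2 := by omega
  unfold aLeg
  rw [show (((q : ℕ) : ℤ) : ZMod r) = ((q : ℕ) : ZMod r) by push_cast; rfl,
      show (((r : ℕ) : ℤ) : ZMod q) = ((r : ℕ) : ZMod q) by push_cast; rfl,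
      ZMod.exists_sq_eq_prime_iff_of_mod_four_eq_one hq4 hr2]

/-- The second supplementary law, in the form needed here. -/
lemma aLeg_two {q : ℕ} (hq : q.Prime) (hq4 : q % 4 = 1) :
    (aLeg 2 q = 0 ∧ (q : ZMod 8) = 1) ∨ (aLeg 2 q = 1 ∧ (q : ZMod 8) = 5) := by
  haveI : Fact q.Prime := ⟨hq⟩
  have hq2 : q ≠ 2 := by omega
  have h8 : q % 8 = 1 ∨ q % 8 = 5 := by omega
  have hcast : (q : ZMod 8) = ((q % 8 : ℕ) : ZMod 8) := (ZMod.natCast_mod q 8).symm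
  have hsq : IsSquare (((2 : ℤ)) : ZMod q) ↔ (q % 8 = 1 ∨ q % 8 = 7) := by
    rw [show (((2 : ℤ)) : ZMod q) = (2 : ZMod q) by push_cast; rfl]
    exact ZMod.exists_sq_eq_two_iff hq2
  unfold aLeg
  rcases h8 with h | h
  · left
    rw [if_pos (hsq.mpr (Or.inl h)), hcast, h]
    exact ⟨rfl, rfl⟩
  · right
    rw [if_neg (fun hs => by rcases hsq.mp hs with h' | h' <;> omega), hcast, h]
    exact ⟨rfl, rfl⟩

/-- Counting lemma: a product of elements of `{1, 5} ⊆ ZMod 8` is `1` or `5` according to the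
parity of the number of `5`'s. -/
lemma prod_one_five {k : ℕ} (s : Finset (Fin k)) (t : Fin k → ZMod 2) (c : Fin k → ZMod 8)
    (h : ∀ i ∈ s, (t i = 0 ∧ c i = 1) ∨ (t i = 1 ∧ c i = 5)) :
    ∏ i ∈ s, c i = if ∑ i ∈ s, t i = 0 then 1 else 5 := by
  classical
  induction s using Finset.induction_on with
  | empty => simp
  | @insert a s ha ih =>
    rw [Finset.prod_insert ha, Finset.sum_insert ha,
      ih (fun i hi => h i (Finset.mem_insert_of_mem hi))]
    rcases h a (Finset.mem_insert_self _ _) with ⟨ht, hc⟩ | ⟨ht, hc⟩ <;>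
      rcases zmod2_cases (∑ i ∈ s, t i) with hs | hs <;>
      rw [ht, hc, hs] <;> decide

open Matrix

/-- if `rank (A | B) = k − 1` and `rank A = k − 2`, then for any kernel vector
`x` of `A` other than `0` and `(1,…,1)`, the divisor `d = Π p_i^{x_i}` satisfies
`d ≡ 5 (mod 8)`. -/
theorem stmt_12 (k : ℕ) (p : Fin k → ℕ) (hp : ∀ i, (p i).Prime)
    (hinj : Function.Injective p)
    (n : ℕ) (hn : n = ∏ i, p i) (hn8 : n % 8 = 1) (hp4 : ∀ i, p i % 4 = 1)
    (hrkAB : (Matrix.fromCols (monskyA k p)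
      (Matrix.of fun i (_ : Unit) => aLeg 2 (p i))).rank = k - 1)
    (hrkA : (monskyA k p).rank = k - 2)
    (x : Fin k → ZMod 2) (hx : (monskyA k p).mulVec x = 0)
    (hx0 : x ≠ 0) (hx1 : x ≠ fun _ => 1)
    (d : ℕ) (hd : d = ∏ i, p i ^ (x i).val) :
    d % 8 = 5 := by
  classical
  obtain ⟨i0, hi0⟩ : ∃ i, x i = 1 := by
    by_contra h
    push_neg at h
    exact hx0 (funext fun i => (zmod2_cases (x i)).resolve_right (h i))
  obtain ⟨j0, hj0⟩ : ∃ j, x j = 0 := by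
    by_contra h
    push_neg at h
    exact hx1 (funext fun i => (zmod2_cases (x i)).resolve_left (h i))
  have hij : i0 ≠ j0 := by
    intro h
    rw [h, hj0] at hi0
    exact zero_ne_one hi0
  have hk2 : 2 ≤ k := by
    have : 1 < Fintype.card (Fin k) := Fintype.one_lt_card_iff_nontrivial.mpr ⟨⟨i0, j0, hij⟩⟩
    simp at this; omega
  set A := monskyA k p with hAdef
  set B : Fin k → ZMod 2 := fun i => aLeg 2 (p i) with hBdef
  -- symmetry of A (quadratic reciprocity)
  have hsymm : Aᵀ = A := by
    ext i j
    simp only [Matrix.transpose_apply, hAdef, monskyA, Matrix.of_apply]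
    rcases eq_or_ne i j with rfl | hne
    · rfl
    · rw [if_neg (Ne.symm hne), if_neg hne]
      exact aLeg_symm (hp i) (hp j) (hp4 i) (hp4 j)
  -- row sums of A vanish
  have hA1 : A *ᵥ (fun _ => (1 : ZMod 2)) = 0 := by
    funext i
    have hdiag : A i i = ∑ l ∈ Finset.univ.erase i, aLeg (p l) (p i) := by
      simp [hAdef, monskyA, Finset.filter_ne']
    have hmv : (A *ᵥ fun _ => (1 : ZMod 2)) i = ∑ j, A i j := by
      simp [Matrix.mulVec, dotProduct]
    have hoff : ∑ j ∈ Finset.univ.erase i, A i j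
        = ∑ j ∈ Finset.univ.erase i, aLeg (p j) (p i) := by
      refine Finset.sum_congr rfl fun j hj => ?_
      have hji : i ≠ j := fun h => (Finset.mem_erase.mp hj).1 h.symm
      simp [hAdef, monskyA, if_neg hji]
    have : (A *ᵥ fun _ => (1 : ZMod 2)) i
        = A i i + ∑ j ∈ Finset.univ.erase i, A i j := by
      rw [hmv, ← Finset.add_sum_erase _ _ (Finset.mem_univ i)]
    rw [Pi.zero_apply, this, hdiag, hoff, CharTwo.add_self_eq_zero]
  -- Σ B = 0 since n ≡ 1 (mod 8)
  have hcount := prod_one_five Finset.univ B (fun i => (p i : ZMod 8))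
    (fun i _ => aLeg_two (hp i) (hp4 i))
  have hprod : (∏ i, ((p i : ℕ) : ZMod 8)) = 1 := by
    rw [← Nat.cast_prod, ← hn, ← ZMod.natCast_mod n 8, hn8, Nat.cast_one]
  have hB1 : ∑ i, B i = 0 := by
    rcases zmod2_cases (∑ i, B i) with h | h
    · exact h
    · exfalso
      rw [hcount, h, if_neg one_ne_zero] at hprod
      exact (by decide : (5 : ZMod 8) ≠ 1) hprod
  -- the test matrix C with rows (1,…,1) and x
  set C : Matrix (Fin 2) (Fin k) (ZMod 2) := Matrix.of ![fun _ => 1, x] with hCdef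
  have hCs : Function.Surjective C.mulVecLin := by
    intro w
    refine ⟨w 1 • (Pi.single i0 1 : Fin k → ZMod 2) + (w 0 + w 1) • (Pi.single j0 1 : Fin k → ZMod 2), ?_⟩
    rw [_root_.map_add, _root_.map_smul, _root_.map_smul, Matrix.mulVecLin_apply, Matrix.mulVecLin_apply,
      Matrix.mulVec_single_one, Matrix.mulVec_single_one]
    funext r
    have hC0i : Cᵀ i0 r = C r i0 := rfl
    fin_cases r <;>
      simp only [Pi.add_apply, Pi.smul_apply, Matrix.transpose_apply, smul_eq_mul]
    · show w 1 * (1 : ZMod 2) + (w 0 + w 1) * 1 = w 0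
      rcases zmod2_cases (w 0) with h0 | h0 <;> rcases zmod2_cases (w 1) with h1 | h1 <;>
        rw [h0, h1] <;> decide
    · show w 1 * x i0 + (w 0 + w 1) * x j0 = w 1
      rw [hi0, hj0]
      rcases zmod2_cases (w 0) with h0 | h0 <;> rcases zmod2_cases (w 1) with h1 | h1 <;>
        rw [h0, h1] <;> decide
  have hkerC : Module.finrank (ZMod 2) (LinearMap.ker C.mulVecLin) = k - 2 := by
    have h := LinearMap.finrank_range_add_finrank_ker C.mulVecLin
    rw [LinearMap.range_eq_top.mpr hCs, finrank_top] at h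
    have h2 : Module.finrank (ZMod 2) (Fin 2 → ZMod 2) = 2 := by simp
    have hk : Module.finrank (ZMod 2) (Fin k → ZMod 2) = k := by simp
    rw [h2, hk] at h
    omega
  have hWU : LinearMap.range A.mulVecLin ≤ LinearMap.ker C.mulVecLin := by
    rintro _ ⟨v, rfl⟩
    rw [LinearMap.mem_ker]
    have hrow : ∀ r : Fin 2, A *ᵥ C r = 0 := by
      intro r
      fin_cases r
      · exact hA1
      · exact hx
    funext r
    show (C r) ⬝ᵥ (A *ᵥ v) = 0
    rw [Matrix.dotProduct_mulVec, ← Matrix.mulVec_transpose, hsymm, hrow r,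
      zero_dotProduct]
  have hUW : LinearMap.range A.mulVecLin = LinearMap.ker C.mulVecLin := by
    apply Submodule.eq_of_le_of_finrank_le hWU
    have hr : Module.finrank (ZMod 2) (LinearMap.range A.mulVecLin) = k - 2 := hrkA
    rw [hkerC, hr]
  -- B is not in the column space of A
  set B' : Matrix (Fin k) Unit (ZMod 2) := Matrix.of fun i (_ : Unit) => aLeg 2 (p i) with hB'def
  have hBW : B ∉ LinearMap.range A.mulVecLin := by
    rintro ⟨v, hv⟩
    have hcol : ∀ u₂ : Unit → ZMod 2, B' *ᵥ u₂ = u₂ () • B := by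
      intro u₂
      funext i
      simp [hB'def, Matrix.mulVec, dotProduct, hBdef, mul_comm]
    have hEq : LinearMap.range (Matrix.fromCols A B').mulVecLin
        = LinearMap.range A.mulVecLin := by
      apply le_antisymm
      · rintro _ ⟨u, rfl⟩
        have hu : u = Sum.elim (u ∘ Sum.inl) (u ∘ Sum.inr) := by
          funext s; cases s <;> rfl
        rw [Matrix.mulVecLin_apply, hu, Matrix.fromCols_mulVec_sumElim, hcol, ← hv]
        refine ⟨u ∘ Sum.inl + (u ∘ Sum.inr) () • v, ?_⟩
        rw [_root_.map_add, _root_.map_smul, Matrix.mulVecLin_apply]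
      · rintro _ ⟨v', rfl⟩
        refine ⟨Sum.elim v' 0, ?_⟩
        rw [Matrix.mulVecLin_apply, Matrix.mulVecLin_apply, Matrix.fromCols_mulVec_sumElim,
          Matrix.mulVec_zero, add_zero]
    have hrk : (Matrix.fromCols A B').rank = A.rank := by
      unfold Matrix.rank
      rw [hEq]
    rw [hrkAB, hrkA] at hrk
    omega
  -- hence x ⬝ B = 1
  have hBU : B ∉ LinearMap.ker C.mulVecLin := by rw [← hUW]; exact hBW
  have hCB : C.mulVecLin B ≠ 0 := fun h => hBU (LinearMap.mem_ker.mpr h)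
  have h0 : C.mulVecLin B 0 = 0 := by
    show (fun _ : Fin k => (1 : ZMod 2)) ⬝ᵥ B = 0
    simpa [dotProduct] using hB1
  have key : ∑ i, x i * B i = 1 := by
    rcases zmod2_cases (∑ i, x i * B i) with h | h
    · exfalso
      apply hCB
      funext r
      fin_cases r
      · exact h0
      · show x ⬝ᵥ B = 0
        simpa [dotProduct] using h
    · exact h
  -- final arithmetic mod 8
  have hd8 : (d : ZMod 8) = 5 := by
    have hcnt := prod_one_five Finset.univ (fun i => x i * B i)
      (fun i => ((p i : ℕ) : ZMod 8) ^ (x i).val) ?_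
    · rw [hd]
      push_cast
      rw [hcnt, key, if_neg one_ne_zero]
    · intro i _
      rcases zmod2_cases (x i) with h | h
      · left
        constructor
        · show x i * B i = 0
          rw [h, zero_mul]
        · show ((p i : ℕ) : ZMod 8) ^ (x i).val = 1
          rw [h]
          norm_num [ZMod.val_zero]
      · have hv : (x i).val = 1 := by rw [h]; rfl
        rcases aLeg_two (hp i) (hp4 i) with ⟨h1, h2⟩ | ⟨h1, h2⟩
        · left
          constructor
          · show x i * B i = 0
            rw [h, one_mul]; exact h1
          · show ((p i : ℕ) : ZMod 8) ^ (x i).val = 1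
            rw [hv, pow_one]; exact h2
        · right
          constructor
          · show x i * B i = 1
            rw [h, one_mul]; exact h1
          · show ((p i : ℕ) : ZMod 8) ^ (x i).val = 5
            rw [hv, pow_one]; exact h2
  have := ZMod.val_natCast (n := 8) d
  rw [hd8, show ((5 : ZMod 8)).val = 5 from rfl] at this
  omega
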